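/- Let α, β > 0. The inverse of the preconditioner P_MGSS = M_{α,β} is given by P_MGSS⁻¹ = 2·[[I, 0], [(βI + C)⁻¹B, I]] · [[S⁻¹, 0], [0, (βI + C)⁻¹]] · [[I, −Bᵀ(βI + C)⁻¹], [0, I]], where S = αI + A + Bᵀ(βI + C)⁻¹B. -/

import Mathlib

open Matrix

lemma smul_one_posDef {k : ℕ} {c : ℝ} (hc : 0 < c) :
    (c • (1 : Matrix (Fin k) (Fin k) ℝ)).PosDef := by
  rw [smul_one_eq_diagonal]
  exact posDef_diagonal_iff.mpr fun _ => hc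

theorem MGSS_inverse_factorization
    (n m : ℕ) (hn : 0 < n) (hm : 0 < m) (hmn : m ≤ n)
    (A : Matrix (Fin n) (Fin n) ℝ) (B : Matrix (Fin m) (Fin n) ℝ)
    (C : Matrix (Fin m) (Fin m) ℝ)
    (hA : A.PosDef) (hC : C.PosSemidef)
    (α β : ℝ) (hα : 0 < α) (hβ : 0 < β) :
    ((1/2 : ℝ) • Matrix.fromBlocks
        (α • (1 : Matrix (Fin n) (Fin n) ℝ) + A) Bᵀ (-B)
        (β • (1 : Matrix (Fin m) (Fin m) ℝ) + C))⁻¹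
    = (2 : ℝ) •
      (Matrix.fromBlocks 1 0 ((β • (1 : Matrix (Fin m) (Fin m) ℝ) + C)⁻¹ * B) 1 *
       Matrix.fromBlocks
         ((α • (1 : Matrix (Fin n) (Fin n) ℝ) + A +
           Bᵀ * (β • (1 : Matrix (Fin m) (Fin m) ℝ) + C)⁻¹ * B)⁻¹) 0 0
         ((β • (1 : Matrix (Fin m) (Fin m) ℝ) + C)⁻¹) *
       Matrix.fromBlocks 1 (-(Bᵀ * (β • (1 : Matrix (Fin m) (Fin m) ℝ) + C)⁻¹)) 0 1) := by
  set E := β • (1 : Matrix (Fin m) (Fin m) ℝ) + C with hEdef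
  set K := α • (1 : Matrix (Fin n) (Fin n) ℝ) + A with hKdef
  have hE : E.PosDef := (smul_one_posDef hβ).add_posSemidef hC
  have hBtEiB : (Bᵀ * E⁻¹ * B).PosSemidef := by
    have h := (hE.inv.posSemidef).conjTranspose_mul_mul_same B
    simpa [Matrix.conjTranspose_eq_transpose_of_trivial, Matrix.mul_assoc] using h
  have hS : (K + Bᵀ * E⁻¹ * B).PosDef :=
    ((smul_one_posDef hα).add_posSemidef hA.posSemidef).add_posSemidef hBtEiB
  set S := K + Bᵀ * E⁻¹ * B with hSdef
  have hSS : S * S⁻¹ = 1 := mul_nonsing_inv S hS.det_pos.ne'.isUnit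
  have hEE : E * E⁻¹ = 1 := mul_nonsing_inv E hE.det_pos.ne'.isUnit
  apply inv_eq_right_inv
  rw [Matrix.smul_mul, Matrix.mul_smul, smul_smul]
  norm_num
  rw [Matrix.fromBlocks_multiply, Matrix.fromBlocks_multiply, Matrix.fromBlocks_multiply,
    ← Matrix.fromBlocks_one]
  refine Matrix.fromBlocks_inj.mpr ⟨?_, ?_, ?_, ?_⟩ <;>
    simp only [Matrix.one_mul, Matrix.mul_one, Matrix.mul_zero, Matrix.zero_mul, add_zero,
      zero_add, Matrix.mul_neg, Matrix.neg_mul, Matrix.mul_add, ← Matrix.mul_assoc]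
  · rw [← Matrix.add_mul, ← hSdef, hSS]
  · rw [← add_assoc, ← neg_add, ← Matrix.add_mul, ← Matrix.add_mul, ← Matrix.add_mul,
      ← hSdef, hSS, Matrix.one_mul, neg_add_cancel]
  · rw [hEE, Matrix.one_mul, neg_add_cancel]
  · simp only [hEE, Matrix.one_mul, neg_neg, add_neg_cancel_left]
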